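/- arXiv:2006.03741 — 3 statements merged into one kernel-verified Lean document; each statement's English description precedes it below -/
import Mathlib

section
/- Let d > 3 and let ν be the uniform (normalized rotation-invariant) probability measure on the unit sphere S^{d−1} ⊆ ℝ^d. Then for any x ∈ S^{d−1} and any 0 < r < 1, ν(B(x,r)) ≥ (1/(3√d)) · r^{d−1} · (1 − r²/4)^{(d−1)/2}. -/
open MeasureTheory Metric
open scoped ENNReal Real

noncomputable section
namespace Stmt12Aux

lemma keyalg {c s u : ℝ} (hs : 0 < s) (hc : 0 ≤ c) (hcs : c^2 + s^2 = 1)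
    (hu : 0 ≤ u) (hus : u ≤ s) :
    1 - u/s ≤ Real.sqrt (1 - u^2) - c*u/s := by
  have hc1 : c ≤ 1 := by nlinarith
  have hu2 : u^2 ≤ 1 := by nlinarith
  have key : 1 - (1-c)*u/s ≤ Real.sqrt (1 - u^2) := by
    rcases le_or_gt (1 - (1-c)*u/s) 0 with h | h
    · exact h.trans (Real.sqrt_nonneg _)
    · rw [Real.le_sqrt' h]
      have hsq : (s - (1-c)*u)^2 ≤ s^2 * (1 - u^2) := by
        nlinarith [mul_nonneg (mul_nonneg hu (sub_nonneg.2 hc1)) (sub_nonneg.2 hus)]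
      have : (1 - (1-c)*u/s) = (s - (1-c)*u)/s := by field_simp
      rw [this, div_pow, div_le_iff₀ (by positivity)]
      calc (s - (1-c)*u)^2 ≤ s^2 * (1-u^2) := hsq
        _ = (1-u^2) * s^2 := by ring
  have h2 : c*u/s + (1-c)*u/s = u/s := by ring
  linarith

lemma gamma_key (n : ℕ) (hn : 1 ≤ n) :
    Real.sqrt (n+1) * Real.sqrt π * Real.Gamma ((n:ℝ)/2+1) ≤ 3 * Real.Gamma (((n:ℝ)+1)/2+1) := by
  set x : ℝ := ((n:ℝ)+1)/2 with hx
  have hx0 : 0 < x := by positivity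
  have hΓx : 0 < Real.Gamma x := Real.Gamma_pos_of_pos hx0
  have hΓx1 : 0 < Real.Gamma (x+1) := Real.Gamma_pos_of_pos (by linarith)
  have hΓh : 0 < Real.Gamma (x+1/2) := Real.Gamma_pos_of_pos (by linarith)
  have hmid : Real.Gamma (x+1/2)^2 ≤ Real.Gamma x * Real.Gamma (x+1) := by
    have hconv := Real.convexOn_log_Gamma.2 (Set.mem_Ioi.2 hx0) (Set.mem_Ioi.2 (by linarith : (0:ℝ) < x+1))
      (by norm_num : (0:ℝ) ≤ (1/2:ℝ)) (by norm_num : (0:ℝ) ≤ (1/2:ℝ)) (by norm_num)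
    simp only [smul_eq_mul, Function.comp] at hconv
    have heq : (1/2 : ℝ) * x + (1/2) * (x+1) = x + 1/2 := by ring
    rw [heq] at hconv
    have hlog : Real.log (Real.Gamma (x+1/2)^2) ≤ Real.log (Real.Gamma x * Real.Gamma (x+1)) := by
      rw [Real.log_pow, Real.log_mul hΓx.ne' hΓx1.ne']
      push_cast
      linarith
    exact (Real.log_le_log_iff (by positivity) (by positivity)).1 hlog
  have hrec : Real.Gamma (x+1) = x * Real.Gamma x := Real.Gamma_add_one hx0.ne'
  -- n/2 + 1 = x + 1/2 ; (n+1)/2 + 1 = x + 1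
  have e1 : (n:ℝ)/2 + 1 = x + 1/2 := by rw [hx]; ring
  have e2 : ((n:ℝ)+1)/2 + 1 = x + 1 := by rw [hx]
  rw [e1, e2]
  -- square both sides
  have hd : Real.sqrt ((n:ℝ)+1) * Real.sqrt ((n:ℝ)+1) = (n:ℝ)+1 := Real.mul_self_sqrt (by positivity)
  have hpi : Real.sqrt π * Real.sqrt π = π := Real.mul_self_sqrt Real.pi_pos.le
  have hsq : (Real.sqrt ((n:ℝ)+1) * Real.sqrt π * Real.Gamma (x+1/2))^2 ≤ (3 * Real.Gamma (x+1))^2 := by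
    have hxd : (n:ℝ)+1 = 2*x := by rw [hx]; ring
    have h2pi : 2*π ≤ 9 := by nlinarith [Real.pi_le_four]
    have hmul : ((n:ℝ)+1) * π * Real.Gamma (x+1/2)^2 ≤ ((n:ℝ)+1)*π*(Real.Gamma x * Real.Gamma (x+1)) := by
      have : (0:ℝ) ≤ ((n:ℝ)+1)*π := by positivity
      nlinarith [hmid]
    calc (Real.sqrt ((n:ℝ)+1) * Real.sqrt π * Real.Gamma (x+1/2))^2
        = ((n:ℝ)+1) * π * Real.Gamma (x+1/2)^2 := by
          rw [mul_pow, mul_pow, sq, sq, hd, hpi]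
      _ ≤ ((n:ℝ)+1)*π*(Real.Gamma x * Real.Gamma (x+1)) := hmul
      _ = 2*π*(x * Real.Gamma x * Real.Gamma (x+1)) := by rw [hxd]; ring
      _ = 2*π*(Real.Gamma (x+1) * Real.Gamma (x+1)) := by rw [← hrec]
      _ ≤ 9 * (Real.Gamma (x+1) * Real.Gamma (x+1)) := by nlinarith [mul_pos hΓx1 hΓx1]
      _ = (3 * Real.Gamma (x+1))^2 := by ring
  have h1 : (0:ℝ) ≤ Real.sqrt ((n:ℝ)+1) * Real.sqrt π * Real.Gamma (x+1/2) := by positivity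
  nlinarith [hsq, h1, mul_pos (mul_pos (by norm_num : (0:ℝ)<3) hΓx1) hΓx1]


lemma rhs_eq (d : ℕ) (hd : 1 ≤ d) {r : ℝ} (hr0 : 0 < r) (hr1 : r < 1) :
    (1 / (3 * Real.sqrt d)) * r ^ ((d : ℝ) - 1) * (1 - r ^ 2 / 4) ^ (((d : ℝ) - 1) / 2)
      = (r * Real.sqrt (1 - r^2/4)) ^ (d - 1) / (3 * Real.sqrt d) := by
  have ha : (0:ℝ) ≤ 1 - r^2/4 := by nlinarith
  have hcast : (d : ℝ) - 1 = ((d - 1 : ℕ) : ℝ) := by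
    push_cast [Nat.cast_sub hd]; ring
  rw [hcast, Real.rpow_natCast]
  have h2 : (1 - r ^ 2 / 4) ^ (((d - 1 : ℕ) : ℝ) / 2)
      = Real.sqrt (1 - r^2/4) ^ (d - 1 : ℕ) := by
    rw [show ((d - 1 : ℕ) : ℝ) / 2 = (1/2) * ((d-1 : ℕ) : ℝ) by ring,
      Real.rpow_mul ha, Real.rpow_natCast]
    congr 1
    rw [← Real.sqrt_eq_rpow]
  rw [h2, mul_pow]
  ring


variable {d : ℕ}

lemma ball_meas_eq (μ : Measure (EuclideanSpace ℝ (Fin d)))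
    (hinv : ∀ R : (EuclideanSpace ℝ (Fin d)) ≃ₗᵢ[ℝ] EuclideanSpace ℝ (Fin d),
      Measure.map R μ = μ)
    {a b : EuclideanSpace ℝ (Fin d)} (hab : ‖a‖ = ‖b‖) (r : ℝ) :
    μ (ball a r) = μ (ball b r) := by
  set R := Submodule.reflection (Submodule.span ℝ {a - b})ᗮ with hRdef
  have hRa : R a = b := Submodule.reflection_sub hab
  have hpre : (⇑R) ⁻¹' (ball b r) = ball a r := by
    ext z
    simp only [Set.mem_preimage, mem_ball, dist_eq_norm]
    rw [← hRa, ← map_sub R, R.norm_map]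
  calc μ (ball a r) = μ ((⇑R) ⁻¹' (ball b r)) := by rw [hpre]
    _ = (Measure.map R μ) (ball b r) :=
        (Measure.map_apply R.continuous.measurable measurableSet_ball).symm
    _ = μ (ball b r) := by rw [hinv R]

noncomputable def sigma' (d : ℕ) : Measure (EuclideanSpace ℝ (Fin d)) :=
  Measure.map (fun z => ‖z‖⁻¹ • z)
    ((volume (ball (0 : EuclideanSpace ℝ (Fin d)) 1))⁻¹ •
      volume.restrict (ball (0 : EuclideanSpace ℝ (Fin d)) 1 \ {0}))

lemma measurable_proj' :
    Measurable fun z : EuclideanSpace ℝ (Fin d) => ‖z‖⁻¹ • z :=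
  (measurable_norm.inv).smul measurable_id

lemma sigma'_apply {s : Set (EuclideanSpace ℝ (Fin d))} (hs : MeasurableSet s) :
    sigma' d s = (volume (ball (0 : EuclideanSpace ℝ (Fin d)) 1))⁻¹ *
      volume ((fun z : EuclideanSpace ℝ (Fin d) => ‖z‖⁻¹ • z) ⁻¹' s ∩
        (ball (0 : EuclideanSpace ℝ (Fin d)) 1 \ {0})) := by
  rw [sigma', Measure.map_apply measurable_proj' hs, Measure.smul_apply,
    Measure.restrict_apply (measurable_proj' hs), smul_eq_mul]

lemma omega_pos : 0 < volume (ball (0 : EuclideanSpace ℝ (Fin d)) 1) :=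
  measure_ball_pos _ _ one_pos

lemma omega_lt_top : volume (ball (0 : EuclideanSpace ℝ (Fin d)) 1) < ⊤ :=
  measure_ball_lt_top

lemma volume_U (hd : 0 < d) :
    volume (ball (0 : EuclideanSpace ℝ (Fin d)) 1 \ {0}) =
      volume (ball (0 : EuclideanSpace ℝ (Fin d)) 1) := by
  haveI : Nontrivial (EuclideanSpace ℝ (Fin d)) := by
    have : Nonempty (Fin d) := ⟨⟨0, hd⟩⟩
    infer_instance
  exact measure_diff_null (measure_singleton 0)

lemma sigma'_univ (hd : 0 < d) : sigma' d Set.univ = 1 := by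
  rw [sigma'_apply MeasurableSet.univ, Set.preimage_univ, Set.univ_inter, volume_U hd,
    ENNReal.inv_mul_cancel omega_pos.ne' omega_lt_top.ne]

lemma sigma'_compl_sphere :
    sigma' d (sphere (0 : EuclideanSpace ℝ (Fin d)) 1)ᶜ = 0 := by
  rw [sigma'_apply isClosed_sphere.measurableSet.compl]
  have hempty : (fun z : EuclideanSpace ℝ (Fin d) => ‖z‖⁻¹ • z) ⁻¹'
      (sphere (0 : EuclideanSpace ℝ (Fin d)) 1)ᶜ ∩
      (ball (0 : EuclideanSpace ℝ (Fin d)) 1 \ {0}) = ∅ := by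
    ext z
    simp only [Set.mem_inter_iff, Set.mem_preimage, Set.mem_compl_iff, mem_sphere,
    Set.mem_diff, Set.mem_singleton_iff, mem_ball, Set.mem_empty_iff_false, iff_false]
    rintro ⟨hns, -, hz0⟩
    apply hns
    rw [dist_zero_right, norm_smul, norm_inv, norm_norm,
      inv_mul_cancel₀ (norm_ne_zero_iff.2 hz0)]
  rw [hempty, measure_empty, mul_zero]

lemma sigma'_inv (R : (EuclideanSpace ℝ (Fin d)) ≃ₗᵢ[ℝ] EuclideanSpace ℝ (Fin d)) :
    Measure.map R (sigma' d) = sigma' d := by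
  set f : EuclideanSpace ℝ (Fin d) → EuclideanSpace ℝ (Fin d) := fun z => ‖z‖⁻¹ • z with hf
  have hcomm : (⇑R) ∘ f = f ∘ ⇑R := by
    funext z
    simp only [Function.comp_apply, hf, R.map_smul, R.norm_map]
  have hU : (⇑R) ⁻¹' (ball (0 : EuclideanSpace ℝ (Fin d)) 1 \ {0}) =
      ball (0 : EuclideanSpace ℝ (Fin d)) 1 \ {0} := by
    ext z
    simp only [Set.mem_preimage, Set.mem_diff, mem_ball, Set.mem_singleton_iff,
      dist_zero_right, R.norm_map]
    constructor
    · rintro ⟨h1, h2⟩; exact ⟨h1, fun h => h2 (by rw [h, map_zero])⟩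
    · rintro ⟨h1, h2⟩; refine ⟨h1, fun h => h2 ?_⟩
      have := congrArg R.symm h
      simpa using this
  rw [sigma', Measure.map_map R.continuous.measurable measurable_proj', hcomm,
    ← Measure.map_map measurable_proj' R.continuous.measurable]
  congr 1
  rw [MeasureTheory.Measure.map_smul]
  congr 1
  have : Measure.map (⇑R) (volume.restrict (ball (0 : EuclideanSpace ℝ (Fin d)) 1 \ {0}))
      = (Measure.map (⇑R) volume).restrict (ball (0 : EuclideanSpace ℝ (Fin d)) 1 \ {0}) := by
    rw [Measure.restrict_map R.continuous.measurable
      (measurableSet_ball.diff (measurableSet_singleton 0)), hU]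
  rw [this, R.measurePreserving.map_eq]


lemma slice_lb {c s : ℝ} (hs : 0 < s) (hc : 0 ≤ c) (hcs : c^2 + s^2 = 1)
    {q : ℝ} (hq : 0 ≤ q) :
    ENNReal.ofReal (1 - Real.sqrt q / s)
      ≤ volume {t : ℝ | 0 < t ∧ c^2 * (t^2 + q) < t^2 ∧ t^2 + q < 1} := by
  rcases le_or_gt s (Real.sqrt q) with h | h
  · rw [ENNReal.ofReal_eq_zero.2 (by
      have : (1:ℝ) ≤ Real.sqrt q / s := (le_div_iff₀ hs).2 (by linarith)
      linarith)]
    exact zero_le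
  · have hq1 : q < s^2 := by
      have := Real.sq_sqrt hq
      nlinarith [Real.sqrt_nonneg q]
    have hs1 : s^2 ≤ 1 := by nlinarith
    have hsub : Set.Ioo (c * Real.sqrt q / s) (Real.sqrt (1 - q))
        ⊆ {t : ℝ | 0 < t ∧ c^2 * (t^2 + q) < t^2 ∧ t^2 + q < 1} := by
      rintro t ⟨ht1, ht2⟩
      have hlb : 0 ≤ c * Real.sqrt q / s := by positivity
      have ht0 : 0 < t := lt_of_le_of_lt hlb ht1
      have hsq : Real.sqrt q ^ 2 = q := Real.sq_sqrt hq
      refine ⟨ht0, ?_, ?_⟩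
      · -- c^2 (t^2+q) < t^2  ⟺  c^2 q < s^2 t^2
        have h1 : c * Real.sqrt q / s < t := ht1
        have h2 : (c * Real.sqrt q / s)^2 < t^2 := by
          apply pow_lt_pow_left₀ h1 hlb
          norm_num
        have h3 : (c * Real.sqrt q / s)^2 = c^2 * q / s^2 := by
          rw [div_pow, mul_pow, hsq]
        rw [h3, div_lt_iff₀ (by positivity)] at h2
        nlinarith
      · have ht2' : t^2 < Real.sqrt (1-q)^2 := by
          apply pow_lt_pow_left₀ ht2 ht0.le
          norm_num
        rw [Real.sq_sqrt (by nlinarith : (0:ℝ) ≤ 1 - q)] at ht2'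
        linarith
    calc ENNReal.ofReal (1 - Real.sqrt q / s)
        ≤ ENNReal.ofReal (Real.sqrt (1 - (Real.sqrt q)^2) - c * Real.sqrt q / s) := by
          apply ENNReal.ofReal_le_ofReal
          exact keyalg hs hc hcs (Real.sqrt_nonneg q) h.le
      _ = volume (Set.Ioo (c * Real.sqrt q / s) (Real.sqrt (1 - q))) := by
          rw [Real.volume_Ioo, Real.sq_sqrt hq]
      _ ≤ _ := measure_mono hsub


lemma ofReal_max_zero (a : ℝ) : ENNReal.ofReal (max a 0) = ENNReal.ofReal a := by
  rcases le_total a 0 with h | h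
  · rw [max_eq_right h, ENNReal.ofReal_zero, ENNReal.ofReal_eq_zero.2 h]
  · rw [max_eq_left h]

lemma norm_sq_eq (m : ℕ) (z : EuclideanSpace ℝ (Fin m)) : ‖z‖^2 = ∑ i, (z i)^2 := by
  rw [EuclideanSpace.norm_eq, Real.sq_sqrt (by positivity)]
  congr 1; funext i
  rw [Real.norm_eq_abs, sq_abs]

lemma volume_A_lb (n : ℕ) (hn : 1 ≤ n) {c s : ℝ} (hs : 0 < s) (hc : 0 ≤ c)
    (hcs : c^2 + s^2 = 1) :
    ENNReal.ofReal (Real.sqrt π ^ n / Real.Gamma ((n:ℝ)/2+1)) *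
        ENNReal.ofReal (s^n / ((n:ℝ)+1))
      ≤ volume {z : EuclideanSpace ℝ (Fin (n+1)) |
          0 < z 0 ∧ c^2 * ‖z‖^2 < (z 0)^2 ∧ ‖z‖^2 < 1} := by
  haveI : Nonempty (Fin n) := ⟨⟨0, hn⟩⟩
  set In : ℝ≥0∞ := ENNReal.ofReal (Real.sqrt π ^ n / Real.Gamma ((n:ℝ)/2+1)) with hIn
  -- pi-space versions
  set B : Set (Fin (n+1) → ℝ) :=
    {y | 0 < y 0 ∧ c^2 * (∑ i, y i^2) < (y 0)^2 ∧ (∑ i, y i^2) < 1} with hB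
  set C : Set (ℝ × (Fin n → ℝ)) :=
    {p | 0 < p.1 ∧ c^2 * (p.1^2 + ∑ j, p.2 j^2) < p.1^2 ∧ p.1^2 + ∑ j, p.2 j^2 < 1} with hC
  have hBmeas : MeasurableSet B := by
    apply MeasurableSet.inter
    · exact measurableSet_lt measurable_const (measurable_pi_apply 0)
    apply MeasurableSet.inter
    · exact measurableSet_lt
        (measurable_const.mul (Finset.measurable_sum _ fun i _ => (measurable_pi_apply i).pow_const 2))
        ((measurable_pi_apply 0).pow_const 2)
    · exact measurableSet_lt
        (Finset.measurable_sum _ fun i _ => (measurable_pi_apply i).pow_const 2) measurable_const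
  have hCmeas : MeasurableSet C := by
    have hq : Measurable fun p : ℝ × (Fin n → ℝ) => ∑ j, p.2 j^2 :=
      Finset.measurable_sum _ fun j _ => ((measurable_pi_apply j).comp measurable_snd).pow_const 2
    have h1 : Measurable fun p : ℝ × (Fin n → ℝ) => p.1 := measurable_fst
    apply MeasurableSet.inter
    · exact measurableSet_lt measurable_const h1
    apply MeasurableSet.inter
    · exact measurableSet_lt (measurable_const.mul ((h1.pow_const 2).add hq)) (h1.pow_const 2)
    · exact measurableSet_lt ((h1.pow_const 2).add hq) measurable_const
  -- step: volume_E A = volume_pi B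
  have step1 : volume {z : EuclideanSpace ℝ (Fin (n+1)) |
      0 < z 0 ∧ c^2 * ‖z‖^2 < (z 0)^2 ∧ ‖z‖^2 < 1} = volume B := by
    have hmp := EuclideanSpace.volume_preserving_symm_measurableEquiv_toLp (Fin (n+1))
    rw [← hmp.measure_preimage hBmeas.nullMeasurableSet]
    congr 1
    ext z
    have hz : ∀ i, (MeasurableEquiv.toLp 2 (Fin (n+1) → ℝ)).symm z i = z i := fun i => rfl
    simp only [Set.mem_preimage, hB, Set.mem_setOf_eq, hz, norm_sq_eq]
  -- step: volume_pi B = prod volume C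
  have step2 : volume B = (volume.prod volume) C := by
    have hmp2 := volume_preserving_piFinSuccAbove (fun _ : Fin (n+1) => ℝ) 0
    rw [← MeasureTheory.Measure.volume_eq_prod, ← hmp2.measure_preimage hCmeas.nullMeasurableSet]
    congr 1
    ext y
    have h1 : (MeasurableEquiv.piFinSuccAbove (fun _ : Fin (n+1) => ℝ) 0 y).1 = y 0 := rfl
    have h2 : ∀ j, (MeasurableEquiv.piFinSuccAbove (fun _ : Fin (n+1) => ℝ) 0 y).2 j
        = y (Fin.succAbove 0 j) := fun j => rfl
    simp only [hB, hC, Set.mem_preimage, Set.mem_setOf_eq, h1, h2, Fin.succAbove_zero,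
      Fin.sum_univ_succ]
  -- step: lower bound the product measure
  have step3 : ∫⁻ w : Fin n → ℝ, ENNReal.ofReal (1 - Real.sqrt (∑ j, w j^2) / s)
      ≤ (volume.prod volume) C := by
    rw [Measure.prod_apply_symm hCmeas]
    apply lintegral_mono
    intro w
    dsimp only
    have hpre : (fun t : ℝ => (t, w)) ⁻¹' C
        = {t : ℝ | 0 < t ∧ c^2 * (t^2 + ∑ j, w j^2) < t^2 ∧ t^2 + ∑ j, w j^2 < 1} := rfl
    rw [hpre]
    exact slice_lb hs hc hcs (by positivity)
  -- layer cake
  set f : (Fin n → ℝ) → ℝ := fun w => max (1 - Real.sqrt (∑ j, w j^2) / s) 0 with hf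
  have hfcont : Continuous f := by
    apply Continuous.max _ continuous_const
    apply Continuous.sub continuous_const
    apply Continuous.div_const
    exact (continuous_finset_sum _ fun j _ => (continuous_apply j).pow 2).sqrt
  have step4 : ∫⁻ w : Fin n → ℝ, ENNReal.ofReal (1 - Real.sqrt (∑ j, w j^2) / s)
      = ∫⁻ t in Set.Ioi (0:ℝ), volume {w : Fin n → ℝ | t < f w} := by
    have h1 : ∫⁻ w : Fin n → ℝ, ENNReal.ofReal (1 - Real.sqrt (∑ j, w j^2) / s)
        = ∫⁻ w : Fin n → ℝ, ENNReal.ofReal (f w) := by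
      apply lintegral_congr
      intro w
      rw [hf]
      exact (ofReal_max_zero _).symm
    rw [h1]
    exact lintegral_eq_lintegral_meas_lt volume (ae_of_all _ fun w => le_max_right _ _)
      hfcont.measurable.aemeasurable
  -- compute the layer measure
  have step5 : ∀ t : ℝ, 0 < t → volume {w : Fin n → ℝ | t < f w}
      = (ENNReal.ofReal (s*(1-t)))^n * In := by
    intro t ht
    have hset : {w : Fin n → ℝ | t < f w}
        = (⇑(MeasurableEquiv.toLp 2 (Fin n → ℝ))) ⁻¹'
          (ball (0 : EuclideanSpace ℝ (Fin n)) (s*(1-t))) := by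
      ext w
      have hnorm : ‖(MeasurableEquiv.toLp 2 (Fin n → ℝ)) w‖
          = Real.sqrt (∑ j, w j^2) := by
        rw [EuclideanSpace.norm_eq]
        congr 1
        apply Finset.sum_congr rfl
        intro j _
        rw [Real.norm_eq_abs, sq_abs]
        rfl
      simp only [Set.mem_setOf_eq, Set.mem_preimage, mem_ball, dist_zero_right, hnorm, hf,
        lt_max_iff]
      constructor
      · rintro (h | h)
        · rw [lt_sub_iff_add_lt] at h
          have : Real.sqrt (∑ j, w j^2) / s < 1 - t := by linarith
          calc Real.sqrt (∑ j, w j^2) = (Real.sqrt (∑ j, w j^2) / s) * s := by field_simp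
            _ < (1-t) * s := by apply mul_lt_mul_of_pos_right this hs
            _ = s * (1-t) := by ring
        · exact absurd h (not_lt.2 ht.le)
      · intro h
        left
        have h2 : Real.sqrt (∑ j, w j^2) / s < 1 - t := by
          rw [div_lt_iff₀ hs]; linarith [h]
        linarith
    rw [hset, (show MeasurePreserving (MeasurableEquiv.toLp 2 (Fin n → ℝ)) volume volume from
      (EuclideanSpace.volume_preserving_symm_measurableEquiv_toLp (Fin n)).symm).measure_preimage
      measurableSet_ball.nullMeasurableSet, EuclideanSpace.volume_ball, Fintype.card_fin]
  -- integrate: ∫⁻ t in Ioi 0, (ofReal (s(1-t)))^n * In ≥ In * ofReal (s^n/(n+1))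
  have step6 : In * ENNReal.ofReal (s^n / ((n:ℝ)+1))
      ≤ ∫⁻ t in Set.Ioi (0:ℝ), (ENNReal.ofReal (s*(1-t)))^n * In := by
    have hJ : ENNReal.ofReal (s^n / ((n:ℝ)+1))
        ≤ ∫⁻ t in Set.Ioi (0:ℝ), (ENNReal.ofReal (s*(1-t)))^n := by
      have hIoo : ∫⁻ t in Set.Ioo (0:ℝ) 1, (ENNReal.ofReal (s*(1-t)))^n
          ≤ ∫⁻ t in Set.Ioi (0:ℝ), (ENNReal.ofReal (s*(1-t)))^n :=
        lintegral_mono' (Measure.restrict_mono Set.Ioo_subset_Ioi_self le_rfl) le_rfl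
      refine le_trans ?_ hIoo
      have heq : ∫⁻ t in Set.Ioo (0:ℝ) 1, (ENNReal.ofReal (s*(1-t)))^n
          = ∫⁻ t in Set.Ioo (0:ℝ) 1, ENNReal.ofReal ((s*(1-t))^n) := by
        apply setLIntegral_congr_fun measurableSet_Ioo
        intro t ht
        beta_reduce
        rw [ENNReal.ofReal_pow (by nlinarith [ht.2] : (0:ℝ) ≤ s * (1-t))]
      rw [heq]
      have hint : IntegrableOn (fun t : ℝ => (s*(1-t))^n) (Set.Ioo (0:ℝ) 1) volume := by
        apply IntegrableOn.mono_set _ Set.Ioo_subset_Icc_self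
        exact (Continuous.integrableOn_Icc (by continuity))
      rw [← ofReal_integral_eq_lintegral_ofReal hint]
      · apply ENNReal.ofReal_le_ofReal
        have : ∫ t in Set.Ioo (0:ℝ) 1, (s*(1-t))^n
            = ∫ t in (0:ℝ)..1, (s*(1-t))^n := by
          rw [intervalIntegral.integral_of_le (by norm_num : (0:ℝ) ≤ 1),
            ← integral_Ioc_eq_integral_Ioo]
        rw [this]
        have : ∫ t in (0:ℝ)..1, (s*(1-t))^n = s^n * ∫ t in (0:ℝ)..1, (1-t)^n := by
          simp_rw [mul_pow]
          exact intervalIntegral.integral_const_mul _ _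
        rw [this]
        have : ∫ t in (0:ℝ)..1, (1-t)^n = ∫ u in (0:ℝ)..1, u^n := by
          have := intervalIntegral.integral_comp_sub_left (a := 0) (b := 1) (fun u : ℝ => u^n) 1
          simpa using this
        rw [this, integral_pow, one_pow, zero_pow (Nat.succ_ne_zero n)]
        apply le_of_eq
        push_cast
        ring
      · refine (ae_restrict_iff' measurableSet_Ioo).2 (ae_of_all _ fun t ht => ?_)
        have h1 : (0:ℝ) ≤ s * (1 - t) := by nlinarith [ht.2]
        positivity
    calc In * ENNReal.ofReal (s^n / ((n:ℝ)+1))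
        ≤ In * ∫⁻ t in Set.Ioi (0:ℝ), (ENNReal.ofReal (s*(1-t)))^n := by
          exact mul_le_mul_right hJ In
      _ = ∫⁻ t in Set.Ioi (0:ℝ), (ENNReal.ofReal (s*(1-t)))^n * In := by
          rw [mul_comm]
          exact (lintegral_mul_const In
            ((ENNReal.measurable_ofReal.comp (by fun_prop)).pow_const n)).symm
  -- assemble
  rw [step1, step2]
  calc In * ENNReal.ofReal (s^n / ((n:ℝ)+1))
      ≤ ∫⁻ t in Set.Ioi (0:ℝ), (ENNReal.ofReal (s*(1-t)))^n * In := step6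
    _ = ∫⁻ t in Set.Ioi (0:ℝ), volume {w : Fin n → ℝ | t < f w} := by
        apply setLIntegral_congr_fun measurableSet_Ioi
        intro t ht
        beta_reduce
        rw [step5 t ht]
    _ = ∫⁻ w : Fin n → ℝ, ENNReal.ofReal (1 - Real.sqrt (∑ j, w j^2) / s) := step4.symm
    _ ≤ (volume.prod volume) C := step3


lemma nu_eq_sigma' (hd : 0 < d) (ν : Measure (EuclideanSpace ℝ (Fin d)))
    [IsProbabilityMeasure ν]
    (hνsph : ν (sphere (0 : EuclideanSpace ℝ (Fin d)) 1) = 1)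
    (hνinv : ∀ R : (EuclideanSpace ℝ (Fin d)) ≃ₗᵢ[ℝ] EuclideanSpace ℝ (Fin d),
      Measure.map R ν = ν)
    {x : EuclideanSpace ℝ (Fin d)} (hx : ‖x‖ = 1) (r : ℝ) :
    ν (ball x r) = sigma' d (ball x r) := by
  haveI hfin : IsFiniteMeasure (sigma' d) :=
    ⟨by rw [sigma'_univ hd]; exact ENNReal.one_lt_top⟩
  set S : Set (EuclideanSpace ℝ (Fin d) × EuclideanSpace ℝ (Fin d)) :=
    {p | dist p.2 p.1 < r} with hS
  have hSmeas : MeasurableSet S :=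
    (isOpen_lt (continuous_dist.comp (continuous_snd.prodMk continuous_fst)) continuous_const).measurableSet
  have hνcompl : ν (sphere (0 : EuclideanSpace ℝ (Fin d)) 1)ᶜ = 0 := by
    rw [measure_compl isClosed_sphere.measurableSet (measure_ne_top _ _), hνsph,
      measure_univ, tsub_self]
  -- the two iterated integrals
  have hswap :
      ∫⁻ y, ∫⁻ z, S.indicator 1 (y, z) ∂ν ∂(sigma' d)
        = ∫⁻ z, ∫⁻ y, S.indicator 1 (y, z) ∂(sigma' d) ∂ν := by
    apply lintegral_lintegral_swap
    exact (measurable_one.indicator hSmeas).aemeasurable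
  have hinner1 : ∀ y, ∫⁻ z, S.indicator 1 (y, z) ∂ν = ν (ball y r) := by
    intro y
    rw [show (fun z => S.indicator 1 (y, z)) = (ball y r).indicator (1 : EuclideanSpace ℝ (Fin d) → ℝ≥0∞) by
      funext z
      by_cases h : dist z y < r <;>
        simp [Set.indicator_apply, hS, mem_ball, h]]
    exact lintegral_indicator_one measurableSet_ball
  have hinner2 : ∀ z, ∫⁻ y, S.indicator 1 (y, z) ∂(sigma' d) = sigma' d (ball z r) := by
    intro z
    rw [show (fun y => S.indicator 1 (y, z)) = (ball z r).indicator (1 : EuclideanSpace ℝ (Fin d) → ℝ≥0∞) by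
      funext y
      by_cases h : dist z y < r <;>
        simp [Set.indicator_apply, hS, mem_ball, h, dist_comm]]
    exact lintegral_indicator_one measurableSet_ball
  have hL : ∫⁻ y, ∫⁻ z, S.indicator 1 (y, z) ∂ν ∂(sigma' d) = ν (ball x r) := by
    simp_rw [hinner1]
    have hae : (fun y => ν (ball y r)) =ᵐ[sigma' d] (fun _ => ν (ball x r)) := by
      have : ∀ y ∈ sphere (0 : EuclideanSpace ℝ (Fin d)) 1,
          ν (ball y r) = ν (ball x r) := by
        intro y hy
        exact ball_meas_eq ν hνinv (by rw [mem_sphere, dist_zero_right] at hy; rw [hy, hx]) r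
      filter_upwards [measure_eq_zero_iff_ae_notMem.1 (sigma'_compl_sphere (d := d))] with y hy
      exact this y (by simpa using hy)
    rw [lintegral_congr_ae hae, lintegral_const, sigma'_univ hd, mul_one]
  have hR : ∫⁻ z, ∫⁻ y, S.indicator 1 (y, z) ∂(sigma' d) ∂ν = sigma' d (ball x r) := by
    simp_rw [hinner2]
    have hae : (fun z => sigma' d (ball z r)) =ᵐ[ν] (fun _ => sigma' d (ball x r)) := by
      have : ∀ z ∈ sphere (0 : EuclideanSpace ℝ (Fin d)) 1,
          sigma' d (ball z r) = sigma' d (ball x r) := by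
        intro z hz
        exact ball_meas_eq (sigma' d) sigma'_inv
          (by rw [mem_sphere, dist_zero_right] at hz; rw [hz, hx]) r
      filter_upwards [measure_eq_zero_iff_ae_notMem.1 hνcompl] with z hz
      exact this z (by simpa using hz)
    rw [lintegral_congr_ae hae, lintegral_const, measure_univ, mul_one]
  rw [← hL, hswap, hR]


lemma cap_bound (n : ℕ) (hn : 1 ≤ n) {r : ℝ} (hr0 : 0 < r) (hr1 : r < 1) :
    ENNReal.ofReal ((r * Real.sqrt (1 - r^2/4))^n / (3 * Real.sqrt ((n:ℝ)+1)))
      ≤ sigma' (n+1) (ball (EuclideanSpace.single (0 : Fin (n+1)) (1:ℝ)) r) := by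
  set c : ℝ := 1 - r^2/2 with hcdef
  set s : ℝ := r * Real.sqrt (1 - r^2/4) with hsdef
  have ha4 : (0:ℝ) < 1 - r^2/4 := by nlinarith
  have hc : 0 ≤ c := by rw [hcdef]; nlinarith
  have hs : 0 < s := by rw [hsdef]; positivity
  have hcs : c^2 + s^2 = 1 := by
    rw [hcdef, hsdef, mul_pow, Real.sq_sqrt ha4.le]; ring
  -- the cone region
  set A : Set (EuclideanSpace ℝ (Fin (n+1))) :=
    {z | 0 < z 0 ∧ c^2 * ‖z‖^2 < (z 0)^2 ∧ ‖z‖^2 < 1} with hA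
  set e₀ : EuclideanSpace ℝ (Fin (n+1)) := EuclideanSpace.single (0 : Fin (n+1)) (1:ℝ) with he₀
  have hsub : A ⊆ (fun z : EuclideanSpace ℝ (Fin (n+1)) => ‖z‖⁻¹ • z) ⁻¹' (ball e₀ r) ∩
      (ball (0 : EuclideanSpace ℝ (Fin (n+1))) 1 \ {0}) := by
    rintro z ⟨hz0, hz1, hz2⟩
    have hzne : z ≠ 0 := by
      intro h
      rw [h] at hz0
      simp at hz0
    have hnz : 0 < ‖z‖ := norm_pos_iff.2 hzne
    have hkey : c * ‖z‖ < z 0 := by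
      have h1 : (c * ‖z‖)^2 < (z 0)^2 := by rw [mul_pow]; exact hz1
      exact lt_of_pow_lt_pow_left₀ 2 hz0.le h1
    have hmem2 : z ∈ ball (0 : EuclideanSpace ℝ (Fin (n+1))) 1 \ {0} := by
      constructor
      · rw [mem_ball_zero_iff]
        nlinarith [norm_nonneg z]
      · exact hzne
    refine ⟨?_, hmem2⟩
    rw [Set.mem_preimage, mem_ball_iff_norm]
    set u : EuclideanSpace ℝ (Fin (n+1)) := ‖z‖⁻¹ • z with hu
    have hun : ‖u‖ = 1 := by
      rw [hu, norm_smul, norm_inv, norm_norm, inv_mul_cancel₀ hnz.ne']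
    have hinner : (inner ℝ u e₀) = ‖z‖⁻¹ * z 0 := by
      rw [he₀, EuclideanSpace.inner_single_right]
      simp [hu]
    have hne0 : ‖e₀‖ = 1 := by
      rw [he₀, EuclideanSpace.norm_single, norm_one]
    have hgt : c < ‖z‖⁻¹ * z 0 := by
      rw [inv_mul_eq_div, lt_div_iff₀ hnz]
      exact hkey
    have hsq : ‖u - e₀‖^2 < r^2 := by
      rw [norm_sub_sq_real, hun, hne0, hinner]
      rw [hcdef] at hgt
      nlinarith
    exact lt_of_pow_lt_pow_left₀ 2 hr0.le hsq
  -- assemble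
  have hballmeas : MeasurableSet (ball e₀ r) := measurableSet_ball
  rw [sigma'_apply hballmeas]
  have hvol : ENNReal.ofReal (Real.sqrt π ^ n / Real.Gamma ((n:ℝ)/2+1)) *
        ENNReal.ofReal (s^n / ((n:ℝ)+1))
      ≤ volume ((fun z : EuclideanSpace ℝ (Fin (n+1)) => ‖z‖⁻¹ • z) ⁻¹' (ball e₀ r) ∩
        (ball (0 : EuclideanSpace ℝ (Fin (n+1))) 1 \ {0})) :=
    le_trans (volume_A_lb n hn hs hc hcs) (measure_mono hsub)
  have hω : volume (ball (0 : EuclideanSpace ℝ (Fin (n+1))) 1)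
      = ENNReal.ofReal (Real.sqrt π ^ (n+1) / Real.Gamma (((n:ℝ)+1)/2+1)) := by
    rw [EuclideanSpace.volume_ball, Fintype.card_fin, ENNReal.ofReal_one, one_pow, one_mul]
    norm_num
  have hΓd : 0 < Real.Gamma (((n:ℝ)+1)/2+1) := Real.Gamma_pos_of_pos (by positivity)
  have hΓn : 0 < Real.Gamma ((n:ℝ)/2+1) := Real.Gamma_pos_of_pos (by positivity)
  have hωr : (0:ℝ) < Real.sqrt π ^ (n+1) / Real.Gamma (((n:ℝ)+1)/2+1) := by
    have : (0:ℝ) < Real.sqrt π := Real.sqrt_pos.2 Real.pi_pos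
    positivity
  calc ENNReal.ofReal (s^n / (3 * Real.sqrt ((n:ℝ)+1)))
      ≤ ENNReal.ofReal ((Real.sqrt π ^ (n+1) / Real.Gamma (((n:ℝ)+1)/2+1))⁻¹ *
          (Real.sqrt π ^ n / Real.Gamma ((n:ℝ)/2+1) * (s^n / ((n:ℝ)+1)))) := by
        apply ENNReal.ofReal_le_ofReal
        have hP : (0:ℝ) < Real.sqrt π := Real.sqrt_pos.2 Real.pi_pos
        have hPn : (0:ℝ) < Real.sqrt π ^ n := by positivity
        have hd' : (0:ℝ) < Real.sqrt ((n:ℝ)+1) := Real.sqrt_pos.2 (by positivity)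
        have hd'sq : Real.sqrt ((n:ℝ)+1) * Real.sqrt ((n:ℝ)+1) = (n:ℝ)+1 :=
          Real.mul_self_sqrt (by positivity)
        have hb : (Real.sqrt π ^ (n+1) / Real.Gamma (((n:ℝ)+1)/2+1))⁻¹ *
            (Real.sqrt π ^ n / Real.Gamma ((n:ℝ)/2+1) * (s^n / ((n:ℝ)+1)))
            = Real.Gamma (((n:ℝ)+1)/2+1) * s^n /
              (Real.sqrt π * Real.Gamma ((n:ℝ)/2+1) * ((n:ℝ)+1)) := by
          rw [pow_succ]
          field_simp
        rw [hb, div_le_div_iff₀ (by positivity) (by positivity)]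
        have hkey2 := gamma_key n hn
        have hSd : (0:ℝ) ≤ s^n * Real.sqrt ((n:ℝ)+1) := by positivity
        have h3 := mul_le_mul_of_nonneg_left hkey2 hSd
        set D := Real.sqrt ((n:ℝ)+1) with hD
        have h4 : s^n * (Real.sqrt π * Real.Gamma ((n:ℝ)/2+1) * ((n:ℝ)+1))
            = (s^n * D) * (D * Real.sqrt π * Real.Gamma ((n:ℝ)/2+1)) := by
          rw [← hd'sq]; ring
        have h5 : (s^n * D) * (3 * Real.Gamma (((n:ℝ)+1)/2+1))
            = Real.Gamma (((n:ℝ)+1)/2+1) * s^n * (3 * D) := by ring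
        linarith [h3, h4, h5]
    _ = ENNReal.ofReal ((Real.sqrt π ^ (n+1) / Real.Gamma (((n:ℝ)+1)/2+1))⁻¹) *
          (ENNReal.ofReal (Real.sqrt π ^ n / Real.Gamma ((n:ℝ)/2+1)) *
            ENNReal.ofReal (s^n / ((n:ℝ)+1))) := by
        rw [ENNReal.ofReal_mul (by positivity), ENNReal.ofReal_mul (by positivity)]
    _ = (volume (ball (0 : EuclideanSpace ℝ (Fin (n+1))) 1))⁻¹ *
          (ENNReal.ofReal (Real.sqrt π ^ n / Real.Gamma ((n:ℝ)/2+1)) *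
            ENNReal.ofReal (s^n / ((n:ℝ)+1))) := by
        rw [hω, ENNReal.ofReal_inv_of_pos hωr]
    _ ≤ _ := mul_le_mul_right hvol _

end Stmt12Aux
end

open Stmt12Aux

/-- Lemma 6(a) of the paper.  For `d > 3`, if `ν` is the uniform
(rotation-invariant) probability measure on the unit sphere `S^{d−1} ⊆ ℝ^d`, then for any
unit vector `x` and `0 < r < 1`,
`ν(B(x,r)) ≥ (1/(3√d)) · r^{d−1} · (1 − r²/4)^{(d−1)/2}`. -/
theorem stmt12 (d : ℕ) (hd : 3 < d)
    (ν : Measure (EuclideanSpace ℝ (Fin d))) [IsProbabilityMeasure ν]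
    (hνsph : ν (sphere (0 : EuclideanSpace ℝ (Fin d)) 1) = 1)
    (hνinv : ∀ R : EuclideanSpace ℝ (Fin d) ≃ₗᵢ[ℝ] EuclideanSpace ℝ (Fin d),
      Measure.map R ν = ν)
    (x : EuclideanSpace ℝ (Fin d)) (hx : ‖x‖ = 1)
    (r : ℝ) (hr0 : 0 < r) (hr1 : r < 1) :
    ENNReal.ofReal
        ((1 / (3 * Real.sqrt d)) * r ^ ((d : ℝ) - 1) *
          (1 - r ^ 2 / 4) ^ (((d : ℝ) - 1) / 2))
      ≤ ν (ball x r) := by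
  obtain ⟨n, rfl⟩ : ∃ n, d = n + 1 := ⟨d - 1, by omega⟩
  have hn : 1 ≤ n := by omega
  rw [rhs_eq (n+1) (by omega) hr0 hr1]
  rw [nu_eq_sigma' (by omega) ν hνsph hνinv hx r]
  have hmove : sigma' (n+1) (ball x r)
      = sigma' (n+1) (ball (EuclideanSpace.single (0 : Fin (n+1)) (1:ℝ)) r) := by
    apply ball_meas_eq (sigma' (n+1)) sigma'_inv
    rw [hx, EuclideanSpace.norm_single, norm_one]
  rw [hmove]
  have := cap_bound n hn hr0 hr1
  have hcast : ((n+1 : ℕ) : ℝ) = (n : ℝ) + 1 := by push_cast; ring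
  simpa [Nat.add_sub_cancel, hcast] using this
end

section
/- Let x, x', θ ∈ ℝ^d and let u ∈ ℝ^d be a unit vector with θ = x + Δu for some 0 ≤ Δ < ρ. If ‖x' − (x − ρu)‖ ≥ ρ (i.e., x' does not lie in the open ball of radius ρ centered at x − ρu), then ‖θ − x'‖² ≤ Δ² + ‖x' − x‖² · (ρ + Δ)/ρ. Consequently, for a set M ⊆ ℝ^d avoiding the open ball B(x − ρu, ρ), every point of M within distance r of x lies within distance √(Δ² + r²(ρ+Δ)/ρ) of θ. -/
open Metric

lemma aux15 (d : ℕ) (x x' u : EuclideanSpace ℝ (Fin d)) (Δ ρ : ℝ)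
    (hu : ‖u‖ = 1) (hΔ0 : 0 ≤ Δ) (hΔρ : Δ < ρ)
    (hx' : ρ ≤ ‖x' - (x - ρ • u)‖) :
    ‖x + Δ • u - x'‖ ^ 2 ≤ Δ ^ 2 + ‖x' - x‖ ^ 2 * (ρ + Δ) / ρ := by
  have hρ : 0 < ρ := lt_of_le_of_lt hΔ0 hΔρ
  set v := x' - x with hv
  have hrw : x' - (x - ρ • u) = v + ρ • u := by rw [hv]; abel
  have h1 : ρ ^ 2 ≤ ‖v + ρ • u‖ ^ 2 := by
    rw [hrw] at hx'
    exact pow_le_pow_left₀ hρ.le hx' 2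
  have h2 : ‖v + ρ • u‖ ^ 2 = ‖v‖ ^ 2 + 2 * (ρ * inner ℝ v u) + ρ ^ 2 := by
    rw [@norm_add_sq_real, real_inner_smul_right, norm_smul, Real.norm_eq_abs, hu,
      abs_of_pos hρ]
    ring
  have h3 : x + Δ • u - x' = Δ • u - v := by rw [hv]; abel
  have h4 : ‖Δ • u - v‖ ^ 2 = Δ ^ 2 - 2 * (Δ * inner ℝ v u) + ‖v‖ ^ 2 := by
    rw [@norm_sub_sq_real, real_inner_smul_left, norm_smul, Real.norm_eq_abs, hu,
      abs_of_nonneg hΔ0, real_inner_comm]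
    ring
  have hineq : 0 ≤ ‖v‖ ^ 2 + 2 * (ρ * inner ℝ v u) := by nlinarith
  rw [h3, h4, ← sub_nonneg]
  have heq : Δ ^ 2 + ‖v‖ ^ 2 * (ρ + Δ) / ρ - (Δ ^ 2 - 2 * (Δ * inner ℝ v u) + ‖v‖ ^ 2)
      = Δ * (‖v‖ ^ 2 + 2 * (ρ * inner ℝ v u)) / ρ := by
    field_simp; ring
  rw [heq]
  exact div_nonneg (mul_nonneg hΔ0 hineq) hρ.le

/-- first geometric step in the proof of Lemma 4 of the paper.
Let `θ = x + Δ u` with `u` a unit vector and `0 ≤ Δ < ρ`.  If `x'` avoids the open ball of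
radius `ρ` centered at `x − ρ u`, then `‖θ − x'‖² ≤ Δ² + ‖x' − x‖² (ρ + Δ)/ρ`.
Consequently, for any set `M` avoiding that ball, every point of `M` within distance `r`
of `x` lies within distance `√(Δ² + r²(ρ+Δ)/ρ)` of `θ`. -/
theorem stmt15 (d : ℕ) (x x' θ u : EuclideanSpace ℝ (Fin d)) (Δ ρ : ℝ)
    (hu : ‖u‖ = 1) (hΔ0 : 0 ≤ Δ) (hΔρ : Δ < ρ) (hθ : θ = x + Δ • u)
    (hx' : ρ ≤ ‖x' - (x - ρ • u)‖) :
    ‖θ - x'‖ ^ 2 ≤ Δ ^ 2 + ‖x' - x‖ ^ 2 * (ρ + Δ) / ρ ∧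
    ∀ (M : Set (EuclideanSpace ℝ (Fin d))) (r : ℝ),
      (∀ y ∈ M, y ∉ ball (x - ρ • u) ρ) →
      ∀ y ∈ M, ‖y - x‖ ≤ r → ‖θ - y‖ ≤ Real.sqrt (Δ ^ 2 + r ^ 2 * (ρ + Δ) / ρ) := by
  subst hθ
  have hρ : 0 < ρ := lt_of_le_of_lt hΔ0 hΔρ
  refine ⟨aux15 d x x' u Δ ρ hu hΔ0 hΔρ hx', ?_⟩
  intro M r hM y hy hyr
  have hy' : ρ ≤ ‖y - (x - ρ • u)‖ := by
    have := hM y hy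
    rw [mem_ball, dist_eq_norm] at this
    linarith [not_lt.mp this]
  have h1 := aux15 d x y u Δ ρ hu hΔ0 hΔρ hy'
  have hr0 : 0 ≤ r := le_trans (norm_nonneg _) hyr
  have h2 : ‖y - x‖ ^ 2 ≤ r ^ 2 := pow_le_pow_left₀ (norm_nonneg _) hyr 2
  have h3 : ‖x + Δ • u - y‖ ^ 2 ≤ Δ ^ 2 + r ^ 2 * (ρ + Δ) / ρ := by
    refine h1.trans ?_
    have : ‖y - x‖ ^ 2 * (ρ + Δ) / ρ ≤ r ^ 2 * (ρ + Δ) / ρ := by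
      rw [mul_div_assoc, mul_div_assoc]
      exact mul_le_mul_of_nonneg_right h2 (div_nonneg (by linarith) hρ.le)
    linarith
  calc ‖x + Δ • u - y‖ = Real.sqrt (‖x + Δ • u - y‖ ^ 2) := by
        rw [Real.sqrt_sq (norm_nonneg _)]
    _ ≤ Real.sqrt (Δ ^ 2 + r ^ 2 * (ρ + Δ) / ρ) := Real.sqrt_le_sqrt h3
end

section
/- Let x, x', θ ∈ ℝ^d and let u ∈ ℝ^d be a unit vector with θ = x + Δu for some 0 ≤ Δ < ρ. If ‖x' − (x + ρu)‖ ≥ ρ (i.e., x' does not lie in the open ball of radius ρ centered at x + ρu), then ‖x − x'‖² ≤ (ρ/(ρ − Δ)) · (‖θ − x'‖² − Δ²). Consequently, for a set M ⊆ ℝ^d avoiding the open ball B(x + ρu, ρ), every point of M within distance r' of θ lies within distance √((ρ/(ρ−Δ))((r')² − Δ²)) of x. -/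
open Metric
open scoped RealInnerProductSpace

lemma key_ineq {d : ℕ} (x x' θ u : EuclideanSpace ℝ (Fin d)) (Δ ρ : ℝ)
    (hu : ‖u‖ = 1) (hΔ0 : 0 ≤ Δ) (hΔρ : Δ < ρ) (hθ : θ = x + Δ • u)
    (hx' : ρ ≤ ‖x' - (x + ρ • u)‖) :
    ‖x - x'‖ ^ 2 ≤ ρ / (ρ - Δ) * (‖θ - x'‖ ^ 2 - Δ ^ 2) := by
  have hρ : 0 < ρ := lt_of_le_of_lt hΔ0 hΔρ
  have hv : x' - (x + ρ • u) = -((x - x') + ρ • u) := by abel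
  have h1 : ‖x' - (x + ρ • u)‖ ^ 2 = ‖x - x'‖ ^ 2 + 2 * (ρ * (inner ℝ (x - x') u : ℝ)) + ρ ^ 2 := by
    rw [hv, norm_neg, norm_add_sq_real, real_inner_smul_right, norm_smul,
      Real.norm_eq_abs, abs_of_nonneg hρ.le, hu, mul_one]
  have h2 : ‖θ - x'‖ ^ 2 = ‖x - x'‖ ^ 2 + 2 * (Δ * (inner ℝ (x - x') u : ℝ)) + Δ ^ 2 := by
    have : θ - x' = (x - x') + Δ • u := by rw [hθ]; abel
    rw [this, norm_add_sq_real, real_inner_smul_right, norm_smul,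
      Real.norm_eq_abs, abs_of_nonneg hΔ0, hu, mul_one]
  have hsq : ρ ^ 2 ≤ ‖x' - (x + ρ • u)‖ ^ 2 :=
    pow_le_pow_left₀ hρ.le hx' 2
  rw [h1] at hsq
  rw [div_mul_eq_mul_div, le_div_iff₀ (by linarith)]
  rw [h2]
  nlinarith [sq_nonneg ‖x - x'‖, hsq]

/-- second geometric step in the proof of Lemma 4 of the paper.
Let `θ = x + Δ u` with `u` a unit vector and `0 ≤ Δ < ρ`.  If `x'` avoids the open ball of
radius `ρ` centered at `x + ρ u`, then `‖x − x'‖² ≤ (ρ/(ρ−Δ)) (‖θ − x'‖² − Δ²)`.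
Consequently, for any set `M` avoiding that ball, every point of `M` within distance `r'`
of `θ` lies within distance `√((ρ/(ρ−Δ))((r')² − Δ²))` of `x`. -/
theorem stmt16 (d : ℕ) (x x' θ u : EuclideanSpace ℝ (Fin d)) (Δ ρ : ℝ)
    (hu : ‖u‖ = 1) (hΔ0 : 0 ≤ Δ) (hΔρ : Δ < ρ) (hθ : θ = x + Δ • u)
    (hx' : ρ ≤ ‖x' - (x + ρ • u)‖) :
    ‖x - x'‖ ^ 2 ≤ ρ / (ρ - Δ) * (‖θ - x'‖ ^ 2 - Δ ^ 2) ∧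
    ∀ (M : Set (EuclideanSpace ℝ (Fin d))) (r' : ℝ),
      (∀ y ∈ M, y ∉ ball (x + ρ • u) ρ) →
      ∀ y ∈ M, ‖θ - y‖ ≤ r' →
        ‖x - y‖ ≤ Real.sqrt (ρ / (ρ - Δ) * (r' ^ 2 - Δ ^ 2)) := by
  have hρ : 0 < ρ := lt_of_le_of_lt hΔ0 hΔρ
  refine ⟨key_ineq x x' θ u Δ ρ hu hΔ0 hΔρ hθ hx', ?_⟩
  intro M r' hM y hy hr
  have hyb : ρ ≤ ‖y - (x + ρ • u)‖ := by
    have := hM y hy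
    rw [mem_ball, dist_eq_norm] at this
    linarith [not_lt.mp this]
  have h1 := key_ineq x y θ u Δ ρ hu hΔ0 hΔρ hθ hyb
  have hθy : 0 ≤ ‖θ - y‖ := norm_nonneg _
  have h2 : ‖θ - y‖ ^ 2 ≤ r' ^ 2 := pow_le_pow_left₀ hθy hr 2
  have h3 : ‖x - y‖ ^ 2 ≤ ρ / (ρ - Δ) * (r' ^ 2 - Δ ^ 2) := by
    have hdiv : 0 ≤ ρ / (ρ - Δ) := div_nonneg hρ.le (by linarith)
    nlinarith
  calc ‖x - y‖ = Real.sqrt (‖x - y‖ ^ 2) := by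
        rw [Real.sqrt_sq (norm_nonneg _)]
    _ ≤ Real.sqrt (ρ / (ρ - Δ) * (r' ^ 2 - Δ ^ 2)) := Real.sqrt_le_sqrt h3
end
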